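/- For all n ≥ 1 and k ≥ 1, the descent generating function of the set {w ∈ 𝔖_{n+k+1} : s(w) ∈ 𝔖_{n+1,k}, w(1) ≤ n+k−1, and w(n+k+1) = n+k+1}, i.e. ∑ x^{des(w)} over this set, equals N_{n,k}(x) − x·N_{n−1,k}(x). -/

import Mathlib

open scoped Classical
open Polynomial

noncomputable section

/-- The number of descents of a permutation in one-line notation. -/
def descents {n : ℕ} (w : Equiv.Perm (Fin n)) : ℕ :=
  (Finset.univ.filter fun i : Fin n =>
    ∃ j : Fin n, (j : ℕ) = (i : ℕ) + 1 ∧ w j < w i).card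

/-- The Eulerian polynomial `E_n(x)`. -/
def Eul (n : ℕ) : Polynomial ℚ :=
  ∑ w : Equiv.Perm (Fin n), (X : Polynomial ℚ) ^ descents w

/-- One-line notation of a permutation of `Fin m`, as a list of values in `{1, …, m}`. -/
def oneLine {m : ℕ} (w : Equiv.Perm (Fin m)) : List ℕ :=
  List.ofFn fun i => (w i : ℕ) + 1

/-- Fueled version of the stack-sorting map: `s(L m R) = s(L) s(R) m` for `m` the maximum. -/
def stackSortFuel : ℕ → List ℕ → List ℕ
  | 0, _ => []
  | _ + 1, [] => []
  | f + 1, a :: l =>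
      let m := (a :: l).foldr max 0
      let i := (a :: l).idxOf m
      stackSortFuel f ((a :: l).take i) ++ stackSortFuel f ((a :: l).drop (i + 1)) ++ [m]

/-- The stack-sorting map `s` on lists of naturals. -/
def stackSort (w : List ℕ) : List ℕ := stackSortFuel w.length w

/-- `s(w) ∈ 𝔖_{m-k,k}`, i.e. the stack-sorting image of `w ∈ 𝔖_m` fixes all
(1-indexed) positions `> k`. -/
def SortsInto (m k : ℕ) (w : Equiv.Perm (Fin m)) : Prop :=
  ∀ i : ℕ, k ≤ i → i < m → (stackSort (oneLine w)).getD i 0 = i + 1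

/-- `N_{n,k}(x)`: descent generating function of `{w ∈ 𝔖_{n+k} : s(w) ∈ 𝔖_{n,k}}`. -/
def Nnk (n k : ℕ) : Polynomial ℚ :=
  ∑ w ∈ Finset.univ.filter (fun w : Equiv.Perm (Fin (n + k)) => SortsInto (n + k) k w),
    (X : Polynomial ℚ) ^ descents w

/-! ### foldr max lemmas -/

lemma foldrMax_mem : ∀ (l : List ℕ), l ≠ [] → l.foldr max 0 ∈ l := by
  intro l
  induction l with
  | nil => intro h; exact absurd rfl h
  | cons a t ih =>
    intro _
    cases t with
    | nil => simp
    | cons b t' =>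
      have hfold : ((a :: b :: t').foldr max 0) = max a ((b :: t').foldr max 0) := rfl
      rw [hfold]
      rcases max_choice a ((b :: t').foldr max 0) with h | h
      · rw [h]; exact List.mem_cons_self
      · rw [h]; exact List.mem_cons_of_mem a (ih (by simp))

lemma le_foldrMax {l : List ℕ} {x : ℕ} (hx : x ∈ l) : x ≤ l.foldr max 0 := by
  induction l with
  | nil => cases hx
  | cons a t ih =>
    simp only [List.foldr_cons]
    rcases List.mem_cons.1 hx with rfl | h
    · exact le_max_left _ _
    · exact le_trans (ih h) (le_max_right _ _)

lemma foldrMax_le {l : List ℕ} {M : ℕ} (h : ∀ x ∈ l, x ≤ M) : l.foldr max 0 ≤ M := by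
  induction l with
  | nil => simp
  | cons a t ih =>
    simp only [List.foldr_cons]
    exact max_le (h a (List.mem_cons_self)) (ih fun x hx => h x (List.mem_cons_of_mem a hx))

/-! ### stackSortFuel lemmas -/

lemma SSF_nil (f : ℕ) : stackSortFuel f [] = [] := by cases f <;> rfl

lemma SSF_cons (f : ℕ) (l : List ℕ) (hl : l ≠ []) :
    stackSortFuel (f + 1) l =
      stackSortFuel f (l.take (l.idxOf (l.foldr max 0)))
        ++ stackSortFuel f (l.drop (l.idxOf (l.foldr max 0) + 1))
        ++ [l.foldr max 0] := by
  cases l with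
  | nil => exact absurd rfl hl
  | cons a t => rfl

lemma SSF_congr : ∀ (f g : ℕ) (l : List ℕ), l.length ≤ f → l.length ≤ g →
    stackSortFuel f l = stackSortFuel g l := by
  intro f
  induction f with
  | zero =>
    intro g l hf _
    have : l = [] := List.length_eq_zero_iff.1 (Nat.le_zero.1 hf)
    subst this
    simp [SSF_nil]
  | succ f ih =>
    intro g l hf hg
    cases l with
    | nil => simp [SSF_nil]
    | cons a t =>
      cases g with
      | zero => simp at hg
      | succ g' =>
        have hm : ((a :: t).foldr max 0) ∈ a :: t := foldrMax_mem _ (by simp)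
        have hi : (a :: t).idxOf ((a :: t).foldr max 0) < (a :: t).length :=
          List.idxOf_lt_length_iff.2 hm
        have hf' : t.length + 1 ≤ f + 1 := by simpa using hf
        have hg' : t.length + 1 ≤ g' + 1 := by simpa using hg
        have hi' : (a :: t).idxOf ((a :: t).foldr max 0) < t.length + 1 := by
          simpa using hi
        rw [SSF_cons f _ (by simp), SSF_cons g' _ (by simp)]
        have ht : ((a :: t).take ((a :: t).idxOf ((a :: t).foldr max 0))).length
            ≤ (a :: t).idxOf ((a :: t).foldr max 0) := List.length_take_le _ _
        have hd : ((a :: t).drop ((a :: t).idxOf ((a :: t).foldr max 0) + 1)).length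
            = t.length + 1 - ((a :: t).idxOf ((a :: t).foldr max 0) + 1) := by
          rw [List.length_drop]; simp
        rw [ih g' ((a :: t).take ((a :: t).idxOf ((a :: t).foldr max 0))) (by omega) (by omega),
            ih g' ((a :: t).drop ((a :: t).idxOf ((a :: t).foldr max 0) + 1)) (by omega) (by omega)]

lemma SSF_length : ∀ (f : ℕ) (l : List ℕ), l.length ≤ f →
    (stackSortFuel f l).length = l.length := by
  intro f
  induction f with
  | zero =>
    intro l hf
    have : l = [] := List.length_eq_zero_iff.1 (Nat.le_zero.1 hf)
    subst this
    simp [SSF_nil]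
  | succ f ih =>
    intro l hf
    cases l with
    | nil => simp [SSF_nil]
    | cons a t =>
      have hm : ((a :: t).foldr max 0) ∈ a :: t := foldrMax_mem _ (by simp)
      have hi : (a :: t).idxOf ((a :: t).foldr max 0) < (a :: t).length :=
        List.idxOf_lt_length_iff.2 hm
      have hf' : t.length + 1 ≤ f + 1 := by simpa using hf
      have hi' : (a :: t).idxOf ((a :: t).foldr max 0) < t.length + 1 := by
        simpa using hi
      have ht : ((a :: t).take ((a :: t).idxOf ((a :: t).foldr max 0))).length
          = (a :: t).idxOf ((a :: t).foldr max 0) := by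
        rw [List.length_take]; simp only [List.length_cons]; omega
      have hd : ((a :: t).drop ((a :: t).idxOf ((a :: t).foldr max 0) + 1)).length
          = t.length + 1 - ((a :: t).idxOf ((a :: t).foldr max 0) + 1) := by
        rw [List.length_drop]; simp
      rw [SSF_cons f _ (by simp)]
      simp only [List.length_append, List.length_cons, List.length_nil]
      rw [ih ((a :: t).take ((a :: t).idxOf ((a :: t).foldr max 0))) (by omega),
          ih ((a :: t).drop ((a :: t).idxOf ((a :: t).foldr max 0) + 1)) (by omega), ht, hd]
      omega

lemma stackSort_length (l : List ℕ) : (stackSort l).length = l.length :=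
  SSF_length l.length l le_rfl

lemma stackSort_append_max (u : List ℕ) (M : ℕ) (h : ∀ x ∈ u, x < M) :
    stackSort (u ++ [M]) = stackSort u ++ [M] := by
  have hM : M ∉ u := fun hx => lt_irrefl M (h M hx)
  have hmax : (u ++ [M]).foldr max 0 = M := by
    refine le_antisymm (foldrMax_le ?_) (le_foldrMax (by simp))
    intro x hx
    rcases List.mem_append.1 hx with hx | hx
    · exact le_of_lt (h x hx)
    · simp at hx; omega
  have hidx : (u ++ [M]).idxOf M = u.length := by
    rw [List.idxOf_append_of_notMem hM]; simp
  have hlen : (u ++ [M]).length = u.length + 1 := by simp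
  show stackSortFuel (u ++ [M]).length (u ++ [M]) = stackSortFuel u.length u ++ [M]
  rw [hlen, SSF_cons _ _ (by simp), hmax, hidx]
  rw [List.take_left, show (u ++ [M]).drop (u.length + 1) = [] by
    rw [← List.drop_drop, List.drop_left]; rfl]
  rw [SSF_nil]
  simp

lemma stackSort_cons_max (R : List ℕ) (M : ℕ) (h : ∀ x ∈ R, x < M) :
    stackSort (M :: R) = stackSort R ++ [M] := by
  have hmax : (M :: R).foldr max 0 = M := by
    refine le_antisymm (foldrMax_le ?_) (le_foldrMax (by simp))
    intro x hx
    rcases List.mem_cons.1 hx with rfl | hx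
    · exact le_rfl
    · exact le_of_lt (h x hx)
  have hidx : (M :: R).idxOf M = 0 := List.idxOf_cons_self
  show stackSortFuel (M :: R).length (M :: R) = stackSortFuel R.length R ++ [M]
  rw [List.length_cons, SSF_cons _ _ (by simp), hmax, hidx]
  simp only [List.take_zero, zero_add, List.drop_one, List.tail_cons, SSF_nil,
    List.nil_append, SSF_nil]

/-! ### oneLine lemmas -/

lemma oneLine_length {N : ℕ} (w : Equiv.Perm (Fin N)) : (oneLine w).length = N := by
  simp [oneLine]

lemma oneLine_lt {N : ℕ} (w : Equiv.Perm (Fin N)) : ∀ x ∈ oneLine w, x < N + 1 := by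
  intro x hx
  rw [oneLine, List.mem_ofFn] at hx
  obtain ⟨i, rfl⟩ := hx
  show (w i : ℕ) + 1 < N + 1
  have := (w i).isLt
  omega

lemma oneLine_getD {N : ℕ} (w : Equiv.Perm (Fin N)) (i : ℕ) (h : i < N) :
    (oneLine w).getD i 0 = (w ⟨i, h⟩ : ℕ) + 1 := by
  rw [List.getD_eq_getElem _ _ (by rw [oneLine_length]; exact h)]
  simp [oneLine]

/-! ### extLast -/

def extLast {N : ℕ} (w : Equiv.Perm (Fin N)) : Equiv.Perm (Fin (N + 1)) where
  toFun := Fin.lastCases (Fin.last N) (fun j => (w j).castSucc)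
  invFun := Fin.lastCases (Fin.last N) (fun j => (w.symm j).castSucc)
  left_inv i := by
    cases i using Fin.lastCases with
    | last => simp
    | cast j => simp
  right_inv i := by
    cases i using Fin.lastCases with
    | last => simp
    | cast j => simp

@[simp] lemma extLast_castSucc {N : ℕ} (w : Equiv.Perm (Fin N)) (j : Fin N) :
    extLast w j.castSucc = (w j).castSucc := by
  simp [extLast, Equiv.coe_fn_mk]

@[simp] lemma extLast_last {N : ℕ} (w : Equiv.Perm (Fin N)) :
    extLast w (Fin.last N) = Fin.last N := by
  simp [extLast, Equiv.coe_fn_mk]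

lemma oneLine_extLast {N : ℕ} (w : Equiv.Perm (Fin N)) :
    oneLine (extLast w) = oneLine w ++ [N + 1] := by
  simp only [oneLine, List.ofFn_succ', List.concat_eq_append, extLast_castSucc, extLast_last,
    Fin.coe_castSucc, Fin.val_last]

lemma extLast_injective {N : ℕ} : Function.Injective (extLast (N := N)) := by
  intro a b hab
  ext j
  have : extLast a j.castSucc = extLast b j.castSucc := by rw [hab]
  rw [extLast_castSucc, extLast_castSucc] at this
  exact congrArg Fin.val (Fin.castSucc_injective N this)

/-! ### consFirst -/

def consFirst {N : ℕ} (w : Equiv.Perm (Fin N)) : Equiv.Perm (Fin (N + 1)) where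
  toFun := Fin.cases (Fin.last N) (fun j => (w j).castSucc)
  invFun := Fin.lastCases 0 (fun j => (w.symm j).succ)
  left_inv i := by
    cases i using Fin.cases with
    | zero => simp
    | succ j => simp
  right_inv i := by
    cases i using Fin.lastCases with
    | last => simp
    | cast j => simp

@[simp] lemma consFirst_zero {N : ℕ} (w : Equiv.Perm (Fin N)) :
    consFirst w 0 = Fin.last N := by
  simp [consFirst, Equiv.coe_fn_mk]

@[simp] lemma consFirst_succ {N : ℕ} (w : Equiv.Perm (Fin N)) (j : Fin N) :
    consFirst w j.succ = (w j).castSucc := by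
  simp [consFirst, Equiv.coe_fn_mk]

lemma oneLine_consFirst {N : ℕ} (w : Equiv.Perm (Fin N)) :
    oneLine (consFirst w) = (N + 1) :: oneLine w := by
  simp only [oneLine, List.ofFn_succ, consFirst_zero, consFirst_succ,
    Fin.coe_castSucc, Fin.val_last]

lemma consFirst_injective {N : ℕ} : Function.Injective (consFirst (N := N)) := by
  intro a b hab
  ext j
  have : consFirst a j.succ = consFirst b j.succ := by rw [hab]
  rw [consFirst_succ, consFirst_succ] at this
  exact congrArg Fin.val (Fin.castSucc_injective N this)

/-! ### SortsInto transfer -/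

lemma sortsInto_extLast {N k : ℕ} (w : Equiv.Perm (Fin N)) :
    SortsInto (N + 1) k (extLast w) ↔ SortsInto N k w := by
  have hs : stackSort (oneLine (extLast w)) = stackSort (oneLine w) ++ [N + 1] := by
    rw [oneLine_extLast]
    exact stackSort_append_max _ _ (oneLine_lt w)
  have hlen : (stackSort (oneLine w)).length = N := by
    rw [stackSort_length, oneLine_length]
  constructor
  · intro h i hki hiN
    have := h i hki (by omega)
    rwa [hs, List.getD_append _ _ _ _ (by omega)] at this
  · intro h i hki hiN
    rw [hs]
    rcases Nat.lt_or_ge i N with hi | hi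
    · rw [List.getD_append _ _ _ _ (by omega)]
      exact h i hki hi
    · have hiN' : i = N := by omega
      rw [List.getD_append_right _ _ _ _ (by omega), hlen, hiN']
      simp

lemma sortsInto_consFirst {N k : ℕ} (w : Equiv.Perm (Fin N)) :
    SortsInto (N + 1) k (consFirst w) ↔ SortsInto N k w := by
  have hs : stackSort (oneLine (consFirst w)) = stackSort (oneLine w) ++ [N + 1] := by
    rw [oneLine_consFirst]
    exact stackSort_cons_max _ _ (oneLine_lt w)
  have hlen : (stackSort (oneLine w)).length = N := by
    rw [stackSort_length, oneLine_length]
  constructor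
  · intro h i hki hiN
    have := h i hki (by omega)
    rwa [hs, List.getD_append _ _ _ _ (by omega)] at this
  · intro h i hki hiN
    rw [hs]
    rcases Nat.lt_or_ge i N with hi | hi
    · rw [List.getD_append _ _ _ _ (by omega)]
      exact h i hki hi
    · have hiN' : i = N := by omega
      rw [List.getD_append_right _ _ _ _ (by omega), hlen, hiN']
      simp

/-! ### descents transfer -/

lemma descents_extLast {N : ℕ} (w : Equiv.Perm (Fin N)) :
    descents (extLast w) = descents w := by
  unfold descents
  refine (Finset.card_bij (fun a _ => Fin.castSucc a) ?_ ?_ ?_).symm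
  · intro a ha
    simp only [Finset.mem_filter, Finset.mem_univ, true_and] at ha ⊢
    obtain ⟨j, hj1, hj2⟩ := ha
    refine ⟨j.castSucc, by simp [hj1], ?_⟩
    rw [extLast_castSucc, extLast_castSucc]
    exact Fin.castSucc_lt_castSucc_iff.2 hj2
  · intro a _ b _ h
    exact Fin.castSucc_injective N h
  · intro b hb
    simp only [Finset.mem_filter, Finset.mem_univ, true_and] at hb
    obtain ⟨j, hj1, hj2⟩ := hb
    have hbN : (b : ℕ) < N := by
      have := j.isLt
      omega
    have hb' : b = (⟨(b : ℕ), hbN⟩ : Fin N).castSucc := Fin.ext rfl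
    have hjN : (j : ℕ) < N := by
      by_contra hc
      have hj : j = Fin.last N := Fin.ext (by have := j.isLt; simp only [Fin.val_last]; omega)
      rw [hj, extLast_last, hb', extLast_castSucc] at hj2
      exact absurd hj2 (not_lt.2 (Fin.le_last _))
    have hj' : j = (⟨(j : ℕ), hjN⟩ : Fin N).castSucc := Fin.ext rfl
    refine ⟨⟨(b : ℕ), hbN⟩, ?_, hb'.symm⟩
    simp only [Finset.mem_filter, Finset.mem_univ, true_and]
    refine ⟨⟨(j : ℕ), hjN⟩, by simpa using hj1, ?_⟩
    rw [hj', hb', extLast_castSucc, extLast_castSucc] at hj2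
    exact Fin.castSucc_lt_castSucc_iff.1 hj2

lemma descents_consFirst {N : ℕ} (hN : 1 ≤ N) (w : Equiv.Perm (Fin N)) :
    descents (consFirst w) = descents w + 1 := by
  unfold descents
  have key : (Finset.univ.filter fun i : Fin (N + 1) =>
        ∃ j : Fin (N + 1), (j : ℕ) = (i : ℕ) + 1 ∧ consFirst w j < consFirst w i)
      = insert (0 : Fin (N + 1))
          ((Finset.univ.filter fun i : Fin N =>
            ∃ j : Fin N, (j : ℕ) = (i : ℕ) + 1 ∧ w j < w i).map
              ⟨Fin.succ, Fin.succ_injective N⟩) := by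
    ext b
    simp only [Finset.mem_insert, Finset.mem_map, Finset.mem_filter, Finset.mem_univ, true_and,
      Function.Embedding.coeFn_mk]
    constructor
    · rintro ⟨j, hj1, hj2⟩
      rcases Fin.eq_zero_or_eq_succ b with rfl | ⟨a, rfl⟩
      · exact Or.inl rfl
      · right
        rcases Fin.eq_zero_or_eq_succ j with rfl | ⟨j0, rfl⟩
        · simp at hj1
        · rw [consFirst_succ, consFirst_succ] at hj2
          refine ⟨a, ⟨j0, ?_, Fin.castSucc_lt_castSucc_iff.1 hj2⟩, rfl⟩
          simp only [Fin.val_succ] at hj1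
          omega
    · rintro (rfl | ⟨a, ⟨j', hj1, hj2⟩, rfl⟩)
      · refine ⟨(⟨0, hN⟩ : Fin N).succ, by simp, ?_⟩
        rw [consFirst_succ, consFirst_zero]
        exact Fin.castSucc_lt_last _
      · refine ⟨j'.succ, by simp [hj1], ?_⟩
        rw [consFirst_succ, consFirst_succ]
        exact Fin.castSucc_lt_castSucc_iff.2 hj2
  rw [key, Finset.card_insert_of_notMem (by
    intro hmem
    simp only [Finset.mem_map, Function.Embedding.coeFn_mk] at hmem
    obtain ⟨a, -, ha⟩ := hmem
    exact Fin.succ_ne_zero a ha), Finset.card_map]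

/-! ### summation helper -/

lemma sum_split {α : Type*} [Fintype α] (S P : α → Prop) (f : α → Polynomial ℚ) :
    ∑ x ∈ Finset.univ.filter (fun a => S a), f x
    = ∑ x ∈ Finset.univ.filter (fun a => S a ∧ P a), f x
      + ∑ x ∈ Finset.univ.filter (fun a => S a ∧ ¬ P a), f x := by
  have hU : Finset.univ.filter (fun a => S a)
      = Finset.univ.filter (fun a => S a ∧ P a) ∪ Finset.univ.filter (fun a => S a ∧ ¬ P a) := by
    ext a
    simp only [Finset.mem_filter, Finset.mem_union, Finset.mem_univ, true_and]
    tauto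
  rw [hU, Finset.sum_union]
  rw [Finset.disjoint_left]
  intro a ha hb
  simp only [Finset.mem_filter, Finset.mem_univ, true_and] at ha hb
  tauto

/-! ### the two bijection lemmas -/

lemma L2 (N k : ℕ) (hN : 1 ≤ N) :
    ∑ w ∈ Finset.univ.filter (fun w : Equiv.Perm (Fin (N + 1)) =>
        SortsInto (N + 1) k w ∧ (oneLine w).getD 0 0 = N + 1),
      (X : Polynomial ℚ) ^ descents w
    = X * ∑ w ∈ Finset.univ.filter (fun w : Equiv.Perm (Fin N) => SortsInto N k w),
        (X : Polynomial ℚ) ^ descents w := by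
  rw [Finset.mul_sum]
  symm
  refine Finset.sum_bij (fun w _ => consFirst w) ?_ ?_ ?_ ?_
  · intro a ha
    simp only [Finset.mem_filter, Finset.mem_univ, true_and] at ha ⊢
    refine ⟨(sortsInto_consFirst a).2 ha, ?_⟩
    rw [oneLine_consFirst]
    rfl
  · intro a _ b _ h
    exact consFirst_injective h
  · intro v hv
    simp only [Finset.mem_filter, Finset.mem_univ, true_and] at hv
    obtain ⟨hv1, hv2⟩ := hv
    rw [oneLine_getD v 0 (Nat.succ_pos N)] at hv2
    have h0 : v ⟨0, Nat.succ_pos N⟩ = Fin.last N := Fin.ext (by simp only [Fin.val_last]; omega)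
    have h0' : v 0 = Fin.last N := h0
    have hne : ∀ j : Fin N, v j.succ ≠ Fin.last N := by
      intro j hc
      have : j.succ = (0 : Fin (N + 1)) := v.injective (by rw [hc, h0'])
      exact Fin.succ_ne_zero j this
    have hne2 : ∀ i : Fin N, v.symm i.castSucc ≠ 0 := by
      intro i hc
      have h1 : i.castSucc = v 0 := by rw [← hc, Equiv.apply_symm_apply]
      rw [h0'] at h1
      exact absurd h1 (ne_of_lt (Fin.castSucc_lt_last i))
    let wr : Equiv.Perm (Fin N) :=
      { toFun := fun j => (v j.succ).castPred (hne j)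
        invFun := fun i => (v.symm i.castSucc).pred (hne2 i)
        left_inv := fun j => by
          simp only [Fin.castSucc_castPred, Equiv.symm_apply_apply, Fin.pred_succ]
        right_inv := fun i => by
          simp only [Fin.succ_pred, Equiv.apply_symm_apply, Fin.castPred_castSucc] }
    have hcw : consFirst wr = v := by
      apply Equiv.ext
      intro x
      cases x using Fin.cases with
      | zero => rw [consFirst_zero, h0']
      | succ j =>
        rw [consFirst_succ]
        exact Fin.castSucc_castPred (v j.succ) (hne j)
    refine ⟨wr, ?_, hcw⟩
    simp only [Finset.mem_filter, Finset.mem_univ, true_and]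
    rw [← hcw] at hv1
    exact (sortsInto_consFirst _).1 hv1
  · intro a _
    rw [descents_consFirst hN a, pow_succ]
    ring

lemma L1 (N k : ℕ) (hN : 2 ≤ N) :
    ∑ w ∈ Finset.univ.filter (fun w : Equiv.Perm (Fin (N + 1)) =>
        SortsInto (N + 1) k w ∧ (w ⟨0, by omega⟩ : ℕ) + 1 ≤ N - 1 ∧
          (w ⟨N, by omega⟩ : ℕ) + 1 = N + 1),
      (X : Polynomial ℚ) ^ descents w
    = ∑ w ∈ Finset.univ.filter (fun w : Equiv.Perm (Fin N) =>
        SortsInto N k w ∧ ¬ (oneLine w).getD 0 0 = N),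
      (X : Polynomial ℚ) ^ descents w := by
  symm
  refine Finset.sum_bij (fun w _ => extLast w) ?_ ?_ ?_ ?_
  · intro a ha
    simp only [Finset.mem_filter, Finset.mem_univ, true_and] at ha ⊢
    obtain ⟨h1, h2⟩ := ha
    rw [oneLine_getD a 0 (by omega)] at h2
    refine ⟨(sortsInto_extLast a).2 h1, ?_, ?_⟩
    · have e0 : (⟨0, by omega⟩ : Fin (N + 1)) = Fin.castSucc (⟨0, by omega⟩ : Fin N) :=
        Fin.ext rfl
      rw [e0, extLast_castSucc]
      have hlt := (a ⟨0, by omega⟩).isLt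
      simp only [Fin.coe_castSucc]
      omega
    · have eN : (⟨N, by omega⟩ : Fin (N + 1)) = Fin.last N := Fin.ext rfl
      rw [eN, extLast_last]
      simp
  · intro a _ b _ h
    exact extLast_injective h
  · intro v hv
    simp only [Finset.mem_filter, Finset.mem_univ, true_and] at hv
    obtain ⟨hv1, hv2, hv3⟩ := hv
    have hv3' : (v (Fin.last N) : ℕ) + 1 = N + 1 := hv3
    have hlast : v (Fin.last N) = Fin.last N := Fin.ext (by simp only [Fin.val_last]; omega)
    have hne : ∀ j : Fin N, v j.castSucc ≠ Fin.last N := by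
      intro j hc
      have : j.castSucc = Fin.last N := v.injective (hc.trans hlast.symm)
      exact absurd this (ne_of_lt (Fin.castSucc_lt_last j))
    have hne2 : ∀ j : Fin N, v.symm j.castSucc ≠ Fin.last N := by
      intro j hc
      have h1 : j.castSucc = v (Fin.last N) := by rw [← hc, Equiv.apply_symm_apply]
      rw [hlast] at h1
      exact absurd h1 (ne_of_lt (Fin.castSucc_lt_last j))
    let wr : Equiv.Perm (Fin N) :=
      { toFun := fun j => (v j.castSucc).castPred (hne j)
        invFun := fun j => (v.symm j.castSucc).castPred (hne2 j)
        left_inv := fun j => by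
          simp only [Fin.castSucc_castPred, Equiv.symm_apply_apply, Fin.castPred_castSucc]
        right_inv := fun j => by
          simp only [Fin.castSucc_castPred, Equiv.apply_symm_apply, Fin.castPred_castSucc] }
    have hcw : extLast wr = v := by
      apply Equiv.ext
      intro x
      cases x using Fin.lastCases with
      | last => rw [extLast_last, hlast]
      | cast j =>
        rw [extLast_castSucc]
        exact Fin.castSucc_castPred (v j.castSucc) (hne j)
    refine ⟨wr, ?_, hcw⟩
    simp only [Finset.mem_filter, Finset.mem_univ, true_and]
    constructor
    · rw [← hcw] at hv1
      exact (sortsInto_extLast _).1 hv1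
    · rw [oneLine_getD _ 0 (by omega)]
      have hv2' : (v (Fin.castSucc (⟨0, by omega⟩ : Fin N)) : ℕ) + 1 ≤ N - 1 := hv2
      show ¬ ((wr (⟨0, by omega⟩ : Fin N)) : ℕ) + 1 = N
      have hval : ((wr (⟨0, by omega⟩ : Fin N)) : ℕ)
          = (v (Fin.castSucc (⟨0, by omega⟩ : Fin N)) : ℕ) :=
        Fin.coe_castPred (v (Fin.castSucc (⟨0, by omega⟩ : Fin N))) (hne ⟨0, by omega⟩)
      omega
  · intro a _
    rw [descents_extLast]

/-- The descent generating function of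
`{w ∈ 𝔖_{n+k+1} : s(w) ∈ 𝔖_{n+1,k}, w(1) ≤ n+k-1, w(n+k+1) = n+k+1}`
equals `N_{n,k}(x) - x N_{n-1,k}(x)`. -/
theorem H1_identity (n k : ℕ) (hn : 1 ≤ n) (hk : 1 ≤ k) :
    ∑ w ∈ Finset.univ.filter (fun w : Equiv.Perm (Fin (n + k + 1)) =>
        SortsInto (n + k + 1) k w ∧ (w ⟨0, by omega⟩ : ℕ) + 1 ≤ n + k - 1 ∧
          (w ⟨n + k, by omega⟩ : ℕ) + 1 = n + k + 1),
      (X : Polynomial ℚ) ^ descents w =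
    Nnk n k - X * Nnk (n - 1) k := by
  obtain ⟨m, rfl⟩ : ∃ m, n = m + 1 := ⟨n - 1, by omega⟩
  have step1 :
      ∑ w ∈ Finset.univ.filter (fun w : Equiv.Perm (Fin (m + 1 + k + 1)) =>
          SortsInto (m + 1 + k + 1) k w ∧ (w ⟨0, by omega⟩ : ℕ) + 1 ≤ m + 1 + k - 1 ∧
            (w ⟨m + 1 + k, by omega⟩ : ℕ) + 1 = m + 1 + k + 1),
        (X : Polynomial ℚ) ^ descents w =
      ∑ w ∈ Finset.univ.filter (fun w : Equiv.Perm (Fin (m + 1 + k)) =>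
          SortsInto (m + 1 + k) k w ∧ ¬ (oneLine w).getD 0 0 = m + 1 + k),
        (X : Polynomial ℚ) ^ descents w := L1 (m + 1 + k) k (by omega)
  rw [step1]
  have hsplit :
      ∑ w ∈ Finset.univ.filter (fun w : Equiv.Perm (Fin (m + 1 + k)) =>
          SortsInto (m + 1 + k) k w),
        (X : Polynomial ℚ) ^ descents w
      = ∑ w ∈ Finset.univ.filter (fun w : Equiv.Perm (Fin (m + 1 + k)) =>
          SortsInto (m + 1 + k) k w ∧ (oneLine w).getD 0 0 = m + 1 + k),
          (X : Polynomial ℚ) ^ descents w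
        + ∑ w ∈ Finset.univ.filter (fun w : Equiv.Perm (Fin (m + 1 + k)) =>
            SortsInto (m + 1 + k) k w ∧ ¬ (oneLine w).getD 0 0 = m + 1 + k),
            (X : Polynomial ℚ) ^ descents w := by
    have hU : Finset.univ.filter (fun w : Equiv.Perm (Fin (m + 1 + k)) =>
          SortsInto (m + 1 + k) k w)
        = Finset.univ.filter (fun w : Equiv.Perm (Fin (m + 1 + k)) =>
            SortsInto (m + 1 + k) k w ∧ (oneLine w).getD 0 0 = m + 1 + k)
          ∪ Finset.univ.filter (fun w : Equiv.Perm (Fin (m + 1 + k)) =>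
              SortsInto (m + 1 + k) k w ∧ ¬ (oneLine w).getD 0 0 = m + 1 + k) := by
      ext a
      simp only [Finset.mem_filter, Finset.mem_union, Finset.mem_univ, true_and]
      tauto
    rw [hU, Finset.sum_union]
    rw [Finset.disjoint_left]
    intro a ha hb
    simp only [Finset.mem_filter, Finset.mem_univ, true_and] at ha hb
    tauto
  have h2 :
      ∑ w ∈ Finset.univ.filter (fun w : Equiv.Perm (Fin (m + 1 + k)) =>
          SortsInto (m + 1 + k) k w ∧ (oneLine w).getD 0 0 = m + 1 + k),
        (X : Polynomial ℚ) ^ descents w = X * Nnk m k := by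
    unfold Nnk
    rw [show m + 1 + k = m + k + 1 from by omega]
    exact L2 (m + k) k (by omega)
  have h1 : Nnk (m + 1) k =
      ∑ w ∈ Finset.univ.filter (fun w : Equiv.Perm (Fin (m + 1 + k)) =>
          SortsInto (m + 1 + k) k w),
        (X : Polynomial ℚ) ^ descents w := rfl
  have h3 : Nnk (m + 1 - 1) k = Nnk m k := rfl
  rw [h3, h1, hsplit, h2]
  ring
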